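/- Subset-sum reduction correctness: for positive reals w_1,…,w_n and W > 0, define g(S) = 1 − e^{−∑_{i∈S} w_i} − e^{−W}·∑_{i∈S} w_i for S ⊆ [n]. Then g(S) ≤ 1 − e^{−W} − W·e^{−W} for all S, with equality if and only if ∑_{i∈S} w_i = W. -/

import Mathlib

lemma key_aux (x W : ℝ) :
    (1 - Real.exp (-x) - Real.exp (-W) * x ≤ 1 - Real.exp (-W) - W * Real.exp (-W)) ∧
    (1 - Real.exp (-x) - Real.exp (-W) * x = 1 - Real.exp (-W) - W * Real.exp (-W) ↔ x = W) := by
  have hpos : 0 < Real.exp (-W) := Real.exp_pos _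
  have key : Real.exp (-W) * (1 + (W - x)) ≤ Real.exp (-x) := by
    have h := Real.add_one_le_exp (W - x)
    calc Real.exp (-W) * (1 + (W - x)) = Real.exp (-W) * ((W - x) + 1) := by ring
    _ ≤ Real.exp (-W) * Real.exp (W - x) := by nlinarith
    _ = Real.exp (-x) := by rw [← Real.exp_add]; ring_nf
  constructor
  · nlinarith
  · constructor
    · intro h
      by_contra hne
      have hne' : W - x ≠ 0 := by intro hc; apply hne; linarith
      have hs := Real.add_one_lt_exp hne'
      have : Real.exp (-W) * (1 + (W - x)) < Real.exp (-x) := by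
        calc Real.exp (-W) * (1 + (W - x)) = Real.exp (-W) * ((W - x) + 1) := by ring
        _ < Real.exp (-W) * Real.exp (W - x) := by nlinarith
        _ = Real.exp (-x) := by rw [← Real.exp_add]; ring_nf
      nlinarith
    · intro h; subst h; ring

theorem stmt_14 (n : ℕ) (w : Fin n → ℝ) (W : ℝ) (hw : ∀ i, 0 < w i) (hW : 0 < W) :
    ∀ S : Finset (Fin n),
      (1 - Real.exp (-(∑ i ∈ S, w i)) - Real.exp (-W) * ∑ i ∈ S, w i
          ≤ 1 - Real.exp (-W) - W * Real.exp (-W)) ∧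
      (1 - Real.exp (-(∑ i ∈ S, w i)) - Real.exp (-W) * ∑ i ∈ S, w i
          = 1 - Real.exp (-W) - W * Real.exp (-W) ↔ ∑ i ∈ S, w i = W) := by
  intro S
  exact key_aux (∑ i ∈ S, w i) W
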